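/- In the large complex structure setting with $m^0 = 0$, suppose the F-term equations hold, so that (imaginary parts) $M_{ab} \chi^b = n'_a$ with $M_{ab} = d_{abc} m^c$, and (real parts) $\frac{2 (m^b z_b) z^a}{C'^2} + 3\tilde{n}_0 \frac{z^a}{C' \kappa'} = m^a$ where $\tilde{n}_0 = n'_0 - \frac{1}{2} n'_a \chi^a$. If $\tilde{n}_0 = 0$, then $m^a = 0$ for all $a$, $n'_a = 0$ for all $a$, and $n'_0 = 0$, i.e.\ all fluxes vanish. -/

import Mathlib

/-- In the large complex structure setting with `m⁰ = 0`, if the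
imaginary F-term equations `M_{ab} χ^b = n'_a` (with `M_{ab} = d_{abc} m^c`) and the
real F-term equations `2(m^b z_b) z^a / C'² + 3 ñ₀ z^a/(C' κ') = m^a` hold and
`ñ₀ = n'₀ - ½ n'_a χ^a = 0`, then all fluxes vanish: `m^a = 0`, `n'_a = 0`, `n'₀ = 0`. -/
theorem lcs_m0_zero_degenerate_case
    (h : ℕ) (d : Fin h → Fin h → Fin h → ℝ)
    (hd : ∀ a b c, d a b c = d b a c ∧ d a b c = d a c b)
    (k n0' : ℝ) (n' m : Fin h → ℝ) (z χ : Fin h → ℝ) (hz : z ≠ 0)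
    (κ : ℝ) (hκ : κ = ∑ a, ∑ b, ∑ e, d a b e * z a * z b * z e)
    (κa : Fin h → ℝ) (hκa : κa = fun a => ∑ b, ∑ e, d a b e * z b * z e)
    (κ' : ℝ) (hκ' : κ' = κ + 3 * k / 4) (hκ'pos : 0 < κ')
    (C' : ℝ) (hC' : C' = 1 - 9 * k / (4 * κ')) (hC'ne : C' ≠ 0)
    (hκ3k : κ + 3 * k ≠ 0)
    (za : Fin h → ℝ) (hza : za = fun a => (3 * κa a / (4 * κ')) * C')
    (ntilde0 : ℝ) (hntilde0 : ntilde0 = n0' - (1 / 2) * ∑ a, n' a * χ a)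
    (hIm : ∀ a, ∑ b, (∑ e, d a b e * m e) * χ b = n' a)
    (hRe : ∀ a, 2 * (∑ b, m b * za b) * z a / C' ^ 2 + 3 * ntilde0 * z a / (C' * κ') = m a)
    (h0 : ntilde0 = 0) :
    (∀ a, m a = 0) ∧ (∀ a, n' a = 0) ∧ n0' = 0 := by
  have hκ'ne : κ' ≠ 0 := ne_of_gt hκ'pos
  set S : ℝ := ∑ b, m b * za b with hS
  have hm : ∀ a, m a = 2 * S * z a / C' ^ 2 := by
    intro a
    rw [← hRe a, h0]
    ring
  have hκsum : ∑ b, κa b * z b = κ := by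
    rw [hκ, hκa]
    apply Finset.sum_congr rfl
    intro b _
    simp only [Finset.sum_mul]
    exact Finset.sum_congr rfl fun c _ => Finset.sum_congr rfl fun e _ => by ring
  have hzza : ∑ b, z b * za b = 3 * C' * κ / (4 * κ') := by
    calc ∑ b, z b * za b = ∑ b, (3 * C' / (4 * κ')) * (κa b * z b) := by
          rw [hza]
          exact Finset.sum_congr rfl fun b _ => by ring
      _ = (3 * C' / (4 * κ')) * ∑ b, κa b * z b := by rw [Finset.mul_sum]
      _ = 3 * C' * κ / (4 * κ') := by rw [hκsum]; ring
  have hSeq : S = 2 * S / C' ^ 2 * (3 * C' * κ / (4 * κ')) := by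
    have h1 : S = ∑ b, (2 * S / C' ^ 2) * (z b * za b) := by
      conv_lhs => rw [hS]
      exact Finset.sum_congr rfl fun b _ => by rw [hm b]; ring
    rw [← Finset.mul_sum, hzza] at h1
    exact h1
  have hCκ : C' * κ' = κ - 3 * k / 2 := by
    rw [hC']
    field_simp
    rw [hκ']
    ring
  have hS0 : S = 0 := by
    have h2 : S * (C' ^ 2 * (4 * κ')) = 2 * S * (3 * C' * κ) := by
      field_simp at hSeq
      linear_combination C' * hSeq
    have h3 : C' * (S * (C' * κ') * 4) = C' * (6 * S * κ) := by nlinarith [h2]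
    have h4 := mul_left_cancel₀ hC'ne h3
    rw [hCκ] at h4
    have h5 : S * (κ + 3 * k) = 0 := by nlinarith [h4]
    rcases mul_eq_zero.mp h5 with h6 | h6
    · exact h6
    · exact absurd h6 hκ3k
  have hmz : ∀ a, m a = 0 := by
    intro a
    rw [hm a, hS0]
    ring
  have hn' : ∀ a, n' a = 0 := by
    intro a
    rw [← hIm a]
    apply Finset.sum_eq_zero
    intro b _
    have : (∑ e, d a b e * m e) = 0 := Finset.sum_eq_zero fun e _ => by rw [hmz e]; ring
    rw [this]; ring
  refine ⟨hmz, hn', ?_⟩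
  have hsum0 : (∑ a, n' a * χ a) = 0 := Finset.sum_eq_zero fun a _ => by rw [hn' a]; ring
  rw [h0, hsum0] at hntilde0
  linarith [hntilde0]
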